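/- Let E be a countable set, let Q and Q̃ be irreducible, uniformly bounded intensity matrices on E, and let π and ν be invariant probability vectors for Q and Q̃ respectively. For each k ∈ E let δ_k = inf_{i ≠ k} Q(i,k). If ∑_k δ_k > 0, then ‖ν − π‖ ≤ ‖Q̃ − Q‖ / (∑_k δ_k). -/

import Mathlib

open scoped Classical ENNReal NNReal
open Filter MeasureTheory

noncomputable section

variable {E : Type*}

def matPow (P : E → E → ℝ) : ℕ → E → E → ℝ
  | 0 => fun i j => if i = j then (1 : ℝ) else 0
  | n + 1 => fun i j => ∑' k, matPow P n i k * P k j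

def IsStochastic (P : E → E → ℝ) : Prop :=
  (∀ i j, 0 ≤ P i j) ∧ ∀ i, ∑' j, P i j = 1

def IsIrred (P : E → E → ℝ) : Prop :=
  ∀ i j, ∃ n, 1 ≤ n ∧ 0 < matPow P n i j

def IsProbVec (π : E → ℝ) : Prop :=
  (∀ i, 0 ≤ π i) ∧ ∑' i, π i = 1

def InvariantFor (π : E → ℝ) (P : E → E → ℝ) : Prop :=
  ∀ j, HasSum (fun i => π i * P i j) (π j)

def vecNorm (μ : E → ℝ) : ℝ := ∑' i, |μ i|

def rowSumNorm (L : E → E → ℝ) : ℝ := ⨆ i, ∑' j, |L i j|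

def ergCoeff (B : E → E → ℝ) : ℝ :=
  (1 / 2) * ⨆ p : E × E, ∑' k, |B p.1 k - B p.2 k|

def IsIntensity (Q : E → E → ℝ) : Prop :=
  (∀ i j, i ≠ j → 0 ≤ Q i j) ∧ ∀ i, HasSum (Q i) 0

def UnifBdd (Q : E → E → ℝ) : Prop := ∃ M : ℝ, ∀ i, -Q i i ≤ M

def QIrred (Q : E → E → ℝ) : Prop :=
  ∀ i j, i ≠ j → ∃ (r : ℕ) (k : ℕ → E), 1 ≤ r ∧ k 0 = i ∧ k r = j ∧
    ∀ s < r, 0 < Q (k s) (k (s + 1))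

def QInvariant (π : E → ℝ) (Q : E → E → ℝ) : Prop :=
  ∀ j, HasSum (fun i => π i * Q i j) 0

def transP (Q : E → E → ℝ) (t : ℝ) : E → E → ℝ :=
  fun i j => ∑' n : ℕ, t ^ n / (Nat.factorial n : ℝ) * matPow Q n i j

def qErgCoeff (Q : E → E → ℝ) : ℝ :=
  (1 / 2) * ⨅ p : {p : E × E // p.1 ≠ p.2},
    (|Q p.val.1 p.val.1 - Q p.val.2 p.val.1| + |Q p.val.1 p.val.2 - Q p.val.2 p.val.2|
      - ∑' s : E, if s ≠ p.val.1 ∧ s ≠ p.val.2 then |Q p.val.1 s - Q p.val.2 s| else 0)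

def vVecNorm (V : E → ℝ) (μ : E → ℝ) : ℝ≥0∞ := ∑' i, ENNReal.ofReal (|μ i| * V i)

def vMatNorm (V : E → ℝ) (L : E → E → ℝ) : ℝ≥0∞ :=
  ⨆ i, (∑' j, ENNReal.ofReal (|L i j| * V j)) / ENNReal.ofReal (V i)

def vOneNorm (V : E → ℝ) : ℝ≥0∞ := ⨆ i, 1 / ENNReal.ofReal (V i)


section AuxStmt14
variable {E : Type*}

lemma my_diag_nonpos {Q : E → E → ℝ} (hQ : IsIntensity Q) (i : E) : Q i i ≤ 0 := by
  classical
  have hsum := (hQ.2 i).summable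
  have h0 : (0:ℝ) = Q i i + ∑' j, if j = i then 0 else Q i j := by
    have h := Summable.tsum_eq_add_tsum_ite hsum i
    rwa [(hQ.2 i).tsum_eq] at h
  have hnn : 0 ≤ ∑' j, if j = i then 0 else Q i j := by
    apply tsum_nonneg
    intro j
    by_cases h : j = i
    · simp [h]
    · simpa [h] using hQ.1 i j (Ne.symm h)
  linarith

lemma my_abs_hasSum {Q : E → E → ℝ} (hQ : IsIntensity Q) (i : E) :
    HasSum (fun j => |Q i j|) (-2 * Q i i) := by
  classical
  have heq : (fun j => |Q i j|) = fun j => Q i j + (if j = i then (-2) * Q i i else 0) := by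
    funext j
    by_cases h : j = i
    · subst h
      rw [abs_of_nonpos (my_diag_nonpos hQ j)]
      simp; ring
    · simp [h, abs_of_nonneg (hQ.1 i j (Ne.symm h))]
  have h2 := (hQ.2 i).add (hasSum_ite_eq i ((-2) * Q i i))
  rw [heq]
  simpa using h2

lemma my_entry_le {Q : E → E → ℝ} (hQ : IsIntensity Q) {M : ℝ} (hM : ∀ i, -Q i i ≤ M)
    (i j : E) : |Q i j| ≤ M := by
  classical
  by_cases h : j = i
  · subst h
    rw [abs_of_nonpos (my_diag_nonpos hQ j)]
    exact hM j
  · have h1 : 0 ≤ Q i j := hQ.1 i j (Ne.symm h)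
    have hfin : HasSum (fun k => if k = i then Q i i else 0) (Q i i) := hasSum_ite_eq i _
    have hg : Summable (fun k => if k = i then 0 else Q i k) := by
      have := (hQ.2 i).summable.sub hfin.summable
      apply this.congr
      intro k
      by_cases hk : k = i <;> simp [hk]
    have htg : (0:ℝ) = Q i i + ∑' k, if k = i then 0 else Q i k := by
      have h' := Summable.tsum_eq_add_tsum_ite (hQ.2 i).summable i
      rwa [(hQ.2 i).tsum_eq] at h'
    have hle : Q i j ≤ ∑' k, if k = i then 0 else Q i k := by
      have := Summable.le_tsum hg j (fun k _ => by
        by_cases hk : k = i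
        · simp [hk]
        · simpa [hk] using hQ.1 i k (Ne.symm hk))
      simpa [h] using this
    rw [abs_of_nonneg h1]
    linarith [hM i]

end AuxStmt14

lemma my_abs_tsum_le {ι : Type*} {f : ι → ℝ} (h : Summable fun i => |f i|) :
    |∑' i, f i| ≤ ∑' i, |f i| := by
  have h' : Summable fun i => ‖f i‖ := by simpa [Real.norm_eq_abs] using h
  simpa [Real.norm_eq_abs] using norm_tsum_le_tsum_norm h'

set_option maxHeartbeats 2000000 in
/-- with δ_k = inf_{i ≠ k} Q(i,k), if ∑_k δ_k > 0 then
‖ν − π‖ ≤ ‖Q̃ − Q‖/∑_k δ_k. -/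
theorem stmt14 {E : Type*} [Countable E] (Q Qt : E → E → ℝ) (pi nu : E → ℝ)
    (hQ : IsIntensity Q) (hQt : IsIntensity Qt)
    (hQb : UnifBdd Q) (hQtb : UnifBdd Qt)
    (hQirr : QIrred Q) (hQtirr : QIrred Qt)
    (hpi : IsProbVec pi) (hnu : IsProbVec nu)
    (hpiinv : QInvariant pi Q) (hnuinv : QInvariant nu Qt)
    (hpos : 0 < ∑' k, ⨅ i : {i : E // i ≠ k}, Q i.val k) :
    vecNorm (fun i => nu i - pi i) ≤
      rowSumNorm (fun i j => Qt i j - Q i j) /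
        ∑' k, ⨅ i : {i : E // i ≠ k}, Q i.val k := by
  classical
  rcases subsingleton_or_nontrivial E with hsub | hnt
  · exfalso
    have hz : ∀ k : E, (⨅ i : {i : E // i ≠ k}, Q i.val k) = 0 := by
      intro k
      haveI : IsEmpty {i : E // i ≠ k} := ⟨fun i => i.2 (Subsingleton.elim _ _)⟩
      exact Real.iInf_of_isEmpty _
    rw [tsum_congr hz, tsum_zero] at hpos
    exact lt_irrefl 0 hpos
  · obtain ⟨M, hM⟩ := hQb
    obtain ⟨Mt, hMt⟩ := hQtb
    obtain ⟨i₀⟩ : Nonempty E := inferInstance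
    have hM0 : 0 ≤ M := by
      have := my_diag_nonpos hQ i₀
      have := hM i₀
      linarith
    obtain ⟨hpinn, hpi1⟩ := hpi
    obtain ⟨hnunn, hnu1⟩ := hnu
    simp only [vecNorm, rowSumNorm]
    set δf : E → ℝ := fun k => ⨅ i : {i : E // i ≠ k}, Q i.val k with hδf
    set D : ℝ := ∑' k, δf k with hD
    set m : ℝ := ∑' i, |nu i - pi i| with hm
    set N : ℝ := ⨆ i, ∑' j, |Qt i j - Q i j| with hN
    set C : ℝ := 2 * M with hC
    set R : E → E → ℝ := fun i j => Q i j + (if i = j then C else 0) with hR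
    have hC0 : 0 ≤ C := by rw [hC]; linarith
    have hRd : ∀ i j, R i j = Q i j + (if i = j then C else 0) := fun i j => rfl
    -- delta properties
    have hδnn : ∀ k, 0 ≤ δf k := fun k => Real.iInf_nonneg (fun i => hQ.1 i.1 k i.2)
    have hδle : ∀ (k i : E), i ≠ k → δf k ≤ Q i k := by
      intro k i hik
      have hb : BddBelow (Set.range fun i' : {i' : E // i' ≠ k} => Q i'.val k) := by
        refine ⟨0, ?_⟩
        rintro x ⟨i', rfl⟩
        exact hQ.1 i'.1 k i'.2
      exact ciInf_le hb ⟨i, hik⟩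
    have hδleM : ∀ k, δf k ≤ M := by
      intro k
      obtain ⟨i, hik⟩ := exists_ne k
      exact (hδle k i hik).trans ((le_abs_self _).trans (my_entry_le hQ hM i k))
    have hub : Summable (fun k => if k = i₀ then M else Q i₀ k) := by
      have h2 : (fun k => if k = i₀ then M else Q i₀ k)
          = fun k => Q i₀ k + (if k = i₀ then M - Q i₀ i₀ else 0) := by
        funext k; by_cases h : k = i₀ <;> simp [h]
      rw [h2]
      exact ((hQ.2 i₀).summable.add (hasSum_ite_eq i₀ (M - Q i₀ i₀)).summable)
    have hδsummable : Summable δf :=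
      Summable.of_nonneg_of_le hδnn (fun k => by
        by_cases h : k = i₀
        · subst h; simpa using hδleM k
        · simpa [h] using hδle k i₀ (fun hh => h hh.symm)) hub
    have hδhs : HasSum δf D := by rw [hD]; exact hδsummable.hasSum
    -- R properties
    have hRsum : ∀ i, HasSum (R i) C := by
      intro i
      have he : (fun j => if i = j then C else 0) = (fun j => if j = i then C else 0) := by
        funext j
        by_cases h : i = j
        · rw [if_pos h, if_pos h.symm]
        · rw [if_neg h, if_neg (fun hh => h hh.symm)]
      have h1 : HasSum (fun j => if i = j then C else 0) C := by
        rw [he]; exact hasSum_ite_eq i C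
      have h2 := (hQ.2 i).add h1
      have he2 : (fun j => Q i j + (if i = j then C else 0)) = R i := by
        funext j; rw [hRd i j]
      rw [← he2]
      simpa using h2
    have hRge : ∀ i j, δf j ≤ R i j := by
      intro i j
      by_cases h : i = j
      · subst h
        rw [hRd i i, if_pos rfl]
        have h1 := hM i
        have h2 := hδleM i
        linarith [hC.le, hC.ge]
      · rw [hRd i j, if_neg h, add_zero]
        exact hδle j i h
    have hRub : ∀ i j, R i j - δf j ≤ M + C := by
      intro i j
      have h1 := my_entry_le hQ hM i j
      have h2 := hδnn j
      have h3 : (if i = j then C else 0) ≤ C := by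
        split_ifs
        · exact le_refl C
        · exact hC0
      have h4 := le_abs_self (Q i j)
      rw [hRd i j]
      linarith
    -- probability vectors
    have hpisum : Summable pi := by
      by_contra h
      rw [tsum_eq_zero_of_not_summable h] at hpi1
      norm_num at hpi1
    have hnusum : Summable nu := by
      by_contra h
      rw [tsum_eq_zero_of_not_summable h] at hnu1
      norm_num at hnu1
    have hpihs : HasSum pi 1 := hpisum.hasSum_iff.mpr hpi1
    have hnuhs : HasSum nu 1 := hnusum.hasSum_iff.mpr hnu1
    have hμhs : HasSum (fun i => nu i - pi i) 0 := by simpa using hnuhs.sub hpihs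
    have hμabs : Summable (fun i => |nu i - pi i|) := summable_abs_iff.mpr (hnusum.sub hpisum)
    have hm0 : 0 ≤ m := by
      rw [hm]; exact tsum_nonneg (fun i => abs_nonneg _)
    -- Delta (= Qt - Q) bounds
    have hΔentry : ∀ i j, |Qt i j - Q i j| ≤ Mt + M := fun i j =>
      (abs_sub _ _).trans (add_le_add (my_entry_le hQt hMt i j) (my_entry_le hQ hM i j))
    have hΔrowsum : ∀ i, Summable (fun j => |Qt i j - Q i j|) := by
      intro i
      exact Summable.of_nonneg_of_le (fun j => abs_nonneg _)
        (fun j => abs_sub _ _)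
        (((my_abs_hasSum hQt i).summable).add ((my_abs_hasSum hQ i).summable))
    have htub : ∀ i, (∑' j, |Qt i j - Q i j|) ≤ 2*Mt + 2*M := by
      intro i
      have h1 := Summable.tsum_le_tsum (fun j => abs_sub (Qt i j) (Q i j)) (hΔrowsum i)
        (((my_abs_hasSum hQt i).summable).add ((my_abs_hasSum hQ i).summable))
      have h2 : ∑' j, (|Qt i j| + |Q i j|) = (-2*Qt i i) + (-2*Q i i) :=
        ((my_abs_hasSum hQt i).add (my_abs_hasSum hQ i)).tsum_eq
      have h3 := hMt i
      have h4 := hM i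
      linarith [h1, h2]
    have hNge : ∀ i, (∑' j, |Qt i j - Q i j|) ≤ N := by
      intro i
      rw [hN]
      exact le_ciSup ⟨2*Mt+2*M, by rintro x ⟨i', rfl⟩; exact htub i'⟩ i
    -- the key HasSum computations
    have hGcol : ∀ j, Summable (fun i => nu i * |Qt i j - Q i j|) := by
      intro j
      exact Summable.of_nonneg_of_le (fun i => mul_nonneg (hnunn i) (abs_nonneg _))
        (fun i => mul_le_mul_of_nonneg_left (hΔentry i j) (hnunn i))
        (hnusum.mul_right (Mt + M))
    have hSΔsummable : ∀ j, Summable (fun i => nu i * (Qt i j - Q i j)) := by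
      intro j
      rw [← summable_abs_iff]
      apply (hGcol j).congr
      intro i
      rw [abs_mul, abs_of_nonneg (hnunn i)]
    have hμQ : ∀ j, HasSum (fun i => (nu i - pi i) * Q i j)
        (-(∑' i, nu i * (Qt i j - Q i j))) := by
      intro j
      have h1 : HasSum (fun i => nu i * (Qt i j - Q i j)) (∑' i, nu i * (Qt i j - Q i j)) :=
        (hSΔsummable j).hasSum
      have h2 := (hnuinv j).sub h1
      have he : (fun i => nu i * Qt i j - nu i * (Qt i j - Q i j)) = fun i => nu i * Q i j := by
        funext i; ring
      rw [he] at h2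
      have h3 := h2.sub (hpiinv j)
      have he2 : (fun i => nu i * Q i j - pi i * Q i j) = fun i => (nu i - pi i) * Q i j := by
        funext i; ring
      rw [he2] at h3
      convert h3 using 1
      · rfl
      · ring
    have hμR : ∀ j, HasSum (fun i => (nu i - pi i) * (R i j - δf j))
        (C * (nu j - pi j) - ∑' i, nu i * (Qt i j - Q i j)) := by
      intro j
      have h1 : HasSum (fun i => if i = j then C * (nu j - pi j) else 0)
          (C * (nu j - pi j)) := hasSum_ite_eq j _
      have h2 := (hμQ j).add h1
      have he : (fun i => (nu i - pi i) * Q i j + (if i = j then C * (nu j - pi j) else 0))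
          = fun i => (nu i - pi i) * R i j := by
        funext i
        by_cases h : i = j
        · subst h; rw [hRd i i, if_pos rfl, if_pos rfl]; ring
        · rw [hRd i j, if_neg h, if_neg h]; ring
      rw [he] at h2
      have h3 := h2.sub (hμhs.mul_right (δf j))
      have he2 : (fun i => (nu i - pi i) * R i j - (nu i - pi i) * δf j)
          = fun i => (nu i - pi i) * (R i j - δf j) := by funext i; ring
      rw [he2] at h3
      convert h3 using 1
      · rfl
      · ring
    have hgsummable : ∀ j, Summable (fun i => |nu i - pi i| * (R i j - δf j)) := by
      intro j
      exact Summable.of_nonneg_of_le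
        (fun i => mul_nonneg (abs_nonneg _) (sub_nonneg.mpr (hRge i j)))
        (fun i => mul_le_mul_of_nonneg_left (hRub i j) (abs_nonneg _))
        (hμabs.mul_right (M + C))
    have hstep5 : ∀ j, |C * (nu j - pi j) - ∑' i, nu i * (Qt i j - Q i j)|
        ≤ ∑' i, |nu i - pi i| * (R i j - δf j) := by
      intro j
      rw [← (hμR j).tsum_eq]
      have hsa : Summable fun i => |(nu i - pi i) * (R i j - δf j)| := by
        apply (hgsummable j).congr
        intro i
        rw [abs_mul, abs_of_nonneg (sub_nonneg.mpr (hRge i j))]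
      calc |∑' i, (nu i - pi i) * (R i j - δf j)|
          ≤ ∑' i, |(nu i - pi i) * (R i j - δf j)| := my_abs_tsum_le hsa
        _ = ∑' i, |nu i - pi i| * (R i j - δf j) := by
            apply tsum_congr; intro i
            rw [abs_mul, abs_of_nonneg (sub_nonneg.mpr (hRge i j))]
    -- Fubini for F
    have hFnn : ∀ p : E × E, 0 ≤ |nu p.1 - pi p.1| * (R p.1 p.2 - δf p.2) :=
      fun p => mul_nonneg (abs_nonneg _) (sub_nonneg.mpr (hRge p.1 p.2))
    have hFrow : ∀ i, HasSum (fun j => |nu i - pi i| * (R i j - δf j))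
        (|nu i - pi i| * (C - D)) := fun i => ((hRsum i).sub hδhs).mul_left _
    have hFsummable : Summable (fun p : E × E => |nu p.1 - pi p.1| * (R p.1 p.2 - δf p.2)) := by
      refine (summable_prod_of_nonneg hFnn).mpr ⟨fun i => (hFrow i).summable, ?_⟩
      exact (hμabs.mul_right (C - D)).congr (fun i => ((hFrow i).tsum_eq).symm)
    have hFswap : Summable (fun p : E × E => |nu p.2 - pi p.2| * (R p.2 p.1 - δf p.1)) :=
      (Equiv.prodComm E E).summable_iff.mpr hFsummable
    have hgsum : Summable (fun j => ∑' i, |nu i - pi i| * (R i j - δf j)) :=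
      ((summable_prod_of_nonneg (fun p => hFnn ⟨p.2, p.1⟩)).mp hFswap).2
    have hgtsum : ∑' j, (∑' i, |nu i - pi i| * (R i j - δf j)) = (C - D) * m := by
      have h1 : ∑' (p : E × E), |nu p.2 - pi p.2| * (R p.2 p.1 - δf p.1)
          = ∑' j, ∑' i, |nu i - pi i| * (R i j - δf j) :=
        Summable.tsum_prod' hFswap (fun j => hgsummable j)
      have h2 : ∑' (p : E × E), |nu p.2 - pi p.2| * (R p.2 p.1 - δf p.1)
          = ∑' (p : E × E), |nu p.1 - pi p.1| * (R p.1 p.2 - δf p.2) := by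
        have h := (Equiv.prodComm E E).tsum_eq
          (fun p : E × E => |nu p.1 - pi p.1| * (R p.1 p.2 - δf p.2))
        simpa [Equiv.prodComm_apply, Prod.fst_swap, Prod.snd_swap] using h
      have h3 : ∑' (p : E × E), |nu p.1 - pi p.1| * (R p.1 p.2 - δf p.2)
          = ∑' i, ∑' j, |nu i - pi i| * (R i j - δf j) :=
        Summable.tsum_prod' hFsummable (fun i => (hFrow i).summable)
      have h4 : ∑' i, (∑' j, |nu i - pi i| * (R i j - δf j))
          = ∑' i, |nu i - pi i| * (C - D) :=
        tsum_congr (fun i => (hFrow i).tsum_eq)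
      have h5 : ∑' i, |nu i - pi i| * (C - D) = m * (C - D) := by
        rw [hm]; exact tsum_mul_right
      rw [← h1, h2, h3, h4, h5]; ring
    have hAsummable : Summable (fun j => |C * (nu j - pi j) - ∑' i, nu i * (Qt i j - Q i j)|) :=
      Summable.of_nonneg_of_le (fun j => abs_nonneg _) hstep5 hgsum
    have hbound1 : ∑' j, |C * (nu j - pi j) - ∑' i, nu i * (Qt i j - Q i j)| ≤ (C - D) * m := by
      rw [← hgtsum]
      exact Summable.tsum_le_tsum hstep5 hAsummable hgsum
    -- the S side
    have hGnn : ∀ p : E × E, 0 ≤ nu p.1 * |Qt p.1 p.2 - Q p.1 p.2| :=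
      fun p => mul_nonneg (hnunn _) (abs_nonneg _)
    have hGrow : ∀ i, Summable (fun j => nu i * |Qt i j - Q i j|) :=
      fun i => (hΔrowsum i).mul_left (nu i)
    have hGrowval : ∀ i, (∑' j, nu i * |Qt i j - Q i j|) = nu i * ∑' j, |Qt i j - Q i j| :=
      fun i => tsum_mul_left
    have hrowprodnn : ∀ i, 0 ≤ nu i * ∑' j, |Qt i j - Q i j| :=
      fun i => mul_nonneg (hnunn i) (tsum_nonneg fun j => abs_nonneg _)
    have hrowprod : Summable (fun i => nu i * ∑' j, |Qt i j - Q i j|) :=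
      Summable.of_nonneg_of_le hrowprodnn
        (fun i => mul_le_mul_of_nonneg_left (htub i) (hnunn i))
        (hnusum.mul_right (2*Mt + 2*M))
    have hGsummable : Summable (fun p : E × E => nu p.1 * |Qt p.1 p.2 - Q p.1 p.2|) := by
      refine (summable_prod_of_nonneg hGnn).mpr ⟨fun i => hGrow i, ?_⟩
      exact hrowprod.congr (fun i => (hGrowval i).symm)
    have hGswap : Summable (fun p : E × E => nu p.2 * |Qt p.2 p.1 - Q p.2 p.1|) :=
      (Equiv.prodComm E E).summable_iff.mpr hGsummable
    have hGcolabs : ∀ j, Summable (fun i => nu i * |Qt i j - Q i j|) := hGcol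
    have hTsummable : Summable (fun j => ∑' i, nu i * |Qt i j - Q i j|) :=
      ((summable_prod_of_nonneg (fun p => hGnn ⟨p.2, p.1⟩)).mp hGswap).2
    have hTtsum_le : ∑' j, (∑' i, nu i * |Qt i j - Q i j|) ≤ N := by
      have h1 : ∑' (p : E × E), nu p.2 * |Qt p.2 p.1 - Q p.2 p.1|
          = ∑' j, ∑' i, nu i * |Qt i j - Q i j| :=
        Summable.tsum_prod' hGswap (fun j => hGcolabs j)
      have h2 : ∑' (p : E × E), nu p.2 * |Qt p.2 p.1 - Q p.2 p.1|
          = ∑' (p : E × E), nu p.1 * |Qt p.1 p.2 - Q p.1 p.2| := by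
        have h := (Equiv.prodComm E E).tsum_eq
          (fun p : E × E => nu p.1 * |Qt p.1 p.2 - Q p.1 p.2|)
        simpa [Equiv.prodComm_apply, Prod.fst_swap, Prod.snd_swap] using h
      have h3 : ∑' (p : E × E), nu p.1 * |Qt p.1 p.2 - Q p.1 p.2|
          = ∑' i, ∑' j, nu i * |Qt i j - Q i j| :=
        Summable.tsum_prod' hGsummable (fun i => hGrow i)
      calc ∑' j, ∑' i, nu i * |Qt i j - Q i j|
          = ∑' i, ∑' j, nu i * |Qt i j - Q i j| := by rw [← h1, h2, h3]
        _ = ∑' i, nu i * ∑' j, |Qt i j - Q i j| := tsum_congr hGrowval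
        _ ≤ ∑' i, nu i * N :=
            Summable.tsum_le_tsum (fun i => mul_le_mul_of_nonneg_left (hNge i) (hnunn i))
              hrowprod (hnusum.mul_right N)
        _ = N := by rw [tsum_mul_right, hnu1, one_mul]
    have hSabs : ∀ j, |∑' i, nu i * (Qt i j - Q i j)| ≤ ∑' i, nu i * |Qt i j - Q i j| := by
      intro j
      have hs : Summable fun i => |nu i * (Qt i j - Q i j)| := by
        apply (hGcol j).congr
        intro i
        rw [abs_mul, abs_of_nonneg (hnunn i)]
      calc |∑' i, nu i * (Qt i j - Q i j)| ≤ ∑' i, |nu i * (Qt i j - Q i j)| := my_abs_tsum_le hs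
        _ = ∑' i, nu i * |Qt i j - Q i j| :=
            tsum_congr fun i => by rw [abs_mul, abs_of_nonneg (hnunn i)]
    have hSsummable : Summable (fun j => |∑' i, nu i * (Qt i j - Q i j)|) :=
      Summable.of_nonneg_of_le (fun j => abs_nonneg _) hSabs hTsummable
    have hbound2 : ∑' j, |∑' i, nu i * (Qt i j - Q i j)| ≤ N :=
      (Summable.tsum_le_tsum hSabs hSsummable hTsummable).trans hTtsum_le
    -- combine
    have hptwise : ∀ j, C * |nu j - pi j| ≤
        |C * (nu j - pi j) - ∑' i, nu i * (Qt i j - Q i j)|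
          + |∑' i, nu i * (Qt i j - Q i j)| := by
      intro j
      have h1 := abs_sub_abs_le_abs_sub (C * (nu j - pi j)) (∑' i, nu i * (Qt i j - Q i j))
      have h2 : |C * (nu j - pi j)| = C * |nu j - pi j| := by
        rw [abs_mul, abs_of_nonneg hC0]
      linarith
    have hsum_add : Summable (fun j =>
        |C * (nu j - pi j) - ∑' i, nu i * (Qt i j - Q i j)|
          + |∑' i, nu i * (Qt i j - Q i j)|) := hAsummable.add hSsummable
    have h1 : C * m = ∑' j, C * |nu j - pi j| := by
      rw [hm]; exact tsum_mul_left.symm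
    have h2 : ∑' j, C * |nu j - pi j| ≤ ∑' j,
        (|C * (nu j - pi j) - ∑' i, nu i * (Qt i j - Q i j)|
          + |∑' i, nu i * (Qt i j - Q i j)|) :=
      Summable.tsum_le_tsum hptwise (hμabs.mul_left C) hsum_add
    have h3 : ∑' j, (|C * (nu j - pi j) - ∑' i, nu i * (Qt i j - Q i j)|
          + |∑' i, nu i * (Qt i j - Q i j)|)
        = (∑' j, |C * (nu j - pi j) - ∑' i, nu i * (Qt i j - Q i j)|)
          + ∑' j, |∑' i, nu i * (Qt i j - Q i j)| :=
      Summable.tsum_add hAsummable hSsummable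
    have hDm : D * m ≤ N := by nlinarith [hbound1, hbound2, h1, h2, h3]
    rw [le_div_iff₀ hpos]
    nlinarith [hDm]


end
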